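/- Consider the regression model Y_i = f(X_{i,1}, X_{i,2}) + ε_i, i = 1,…,N, with fixed design points and i.i.d. errors ε_i with mean 0 and finite variance σ_ε². Fix k ∈ ℕ* with k ≤ N, and for each index j let the weight w_j be the k-nearest-neighbor weight centered at a point u_j ∈ ℝ²: w_j(x) = 1/k if x is among the k design points closest to u_j and 0 otherwise (so each w_j selects exactly k design points). Let B_1,…,B_m : ℝ² → [0,1] be nonnegative functions forming a partition of unity at (X_1,X_2), ĉ_j := (Σ_i Y_i·w_j(X_{i,1},X_{i,2})) / (Σ_i w_j(X_{i,1},X_{i,2})), and f̂_w(X_1,X_2) := Σ_j ĉ_j·B_j(X_1,X_2). Then Var[f̂_w(X_1,X_2)] = σ_ε² · Σ_i Σ_j (k_{i,j}/k²)·B_i(X_1,X_2)·B_j(X_1,X_2) ≤ σ_ε²/k, where k_{i,j} is the number of design points common to the k nearest neighbors of u_i and of u_j. -/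

import Mathlib

open MeasureTheory ProbabilityTheory

lemma my_variance_const_add {Ω : Type*} [MeasurableSpace Ω] (μ : Measure Ω)
    [IsProbabilityMeasure μ] (X : Ω → ℝ) (hX : Integrable X μ) (a : ℝ) :
    variance (fun ω => a + X ω) μ = variance X μ := by
  have hmean : μ[fun ω => a + X ω] = a + μ[X] := by
    rw [integral_add (integrable_const a) hX, integral_const]; simp
  rw [variance, variance, evariance, evariance, hmean]
  congr 1
  exact lintegral_congr fun ω => by rw [add_sub_add_left_eq_sub]


/-- **Exact variance of the wQISA estimator with k-NN weights.** In the fixed-design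
regression model `Y_i = f(X_i) + ε_i` with i.i.d. errors of mean `0` and finite
variance `σε2`, let the weight `w_j` be the `k`-nearest-neighbor weight centered at
`u_j`, i.e. `w_j = 1/k` on the set `S_j` of the `k` design points closest to `u_j` and
`0` elsewhere. Then, with `B_j : ℝ² → [0,1]` forming a partition of unity at `X₀`,
`Var[f̂_w(X₀)] = σε2 · ∑_i ∑_j (k_{i,j}/k²) B_i(X₀) B_j(X₀) ≤ σε2 / k`, where
`k_{i,j} = |S_i ∩ S_j|` is the number of design points common to the `k` nearest
neighbors of `u_i` and of `u_j`. -/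
theorem wQISA_kNN_variance
    {Ω : Type*} [MeasurableSpace Ω] (μ : Measure Ω) [IsProbabilityMeasure μ]
    (N m k : ℕ) (hk : 0 < k) (hkN : k ≤ N)
    (X : Fin N → ℝ × ℝ) (f : ℝ × ℝ → ℝ) (σε2 : ℝ)
    -- the errors: independent, identically distributed, mean 0, variance σε2
    (ε : Fin N → Ω → ℝ)
    (hmeas : ∀ i, Measurable (ε i))
    (hindep : iIndepFun ε μ)
    (hident : ∀ i j, IdentDistrib (ε i) (ε j) μ μ)
    (hL2 : ∀ i, MemLp (ε i) 2 μ)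
    (hmean : ∀ i, μ[ε i] = 0)
    (hvar : ∀ i, variance (ε i) μ = σε2)
    -- the observations
    (Y : Fin N → Ω → ℝ) (hY : ∀ i ω, Y i ω = f (X i) + ε i ω)
    -- nonnegative functions with values in [0,1] forming a partition of unity at X₀
    (B : Fin m → ℝ × ℝ → ℝ) (X₀ : ℝ × ℝ)
    (hB0 : ∀ j v, 0 ≤ B j v) (hB1 : ∀ j v, B j v ≤ 1)
    (hpart : ∑ j, B j X₀ = 1)
    -- the k-NN weights: `S j` is the set of the k design points closest to `u j`,
    -- and `w j` equals `1/k` on it and `0` on the other design points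
    (u : Fin m → ℝ × ℝ) (S : Fin m → Finset (Fin N))
    (hScard : ∀ j, (S j).card = k)
    (hSnear : ∀ j, ∀ i ∈ S j, ∀ i' ∉ S j, dist (X i) (u j) ≤ dist (X i') (u j))
    (w : Fin m → ℝ × ℝ → ℝ)
    (hw : ∀ j i, w j (X i) = if i ∈ S j then (1 : ℝ) / k else 0)
    -- the coefficient estimators and the wQISA estimator at X₀
    (c : Fin m → Ω → ℝ)
    (hc : ∀ j ω, c j ω = (∑ i, Y i ω * w j (X i)) / (∑ i, w j (X i)))
    (fhat : Ω → ℝ) (hfhat : ∀ ω, fhat ω = ∑ j, c j ω * B j X₀) :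
    variance fhat μ =
      σε2 * ∑ i, ∑ j, (((S i ∩ S j).card : ℝ) / (k : ℝ) ^ 2) * B i X₀ * B j X₀ ∧
    variance fhat μ ≤ σε2 / k := by
  have hk0 : (k : ℝ) ≠ 0 := Nat.cast_ne_zero.mpr hk.ne'
  -- the weight row sums are 1
  have hwsum : ∀ p, ∑ i, w p (X i) = 1 := by
    intro p
    simp_rw [hw]
    rw [Finset.sum_ite_mem, Finset.univ_inter, Finset.sum_const, hScard, nsmul_eq_mul,
      mul_one_div, div_self hk0]
  set a : Fin N → ℝ := fun i => ∑ p, w p (X i) * B p X₀ with ha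
  set C : ℝ := ∑ p, (∑ i, f (X i) * w p (X i)) * B p X₀ with hC
  -- rewrite fhat
  have hfh : fhat = fun ω => C + ∑ i, a i * ε i ω := by
    funext ω
    rw [hfhat]
    have : ∀ p, c p ω = (∑ i, f (X i) * w p (X i)) + ∑ i, ε i ω * w p (X i) := by
      intro p
      rw [hc, hwsum, div_one, ← Finset.sum_add_distrib]
      congr 1; funext i; rw [hY]; ring
    simp_rw [this, add_mul, Finset.sum_add_distrib, ← hC, Finset.sum_mul]
    congr 1
    rw [Finset.sum_comm]
    refine Finset.sum_congr rfl fun i _ => ?_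
    show ∑ p, ε i ω * w p (X i) * B p X₀ = (∑ p, w p (X i) * B p X₀) * ε i ω
    rw [Finset.sum_mul]
    exact Finset.sum_congr rfl fun p _ => by ring
  -- variance computation
  have hZL2 : ∀ i : Fin N, MemLp (fun ω => a i * ε i ω) 2 μ := fun i => (hL2 i).const_mul (a i)
  have hvarsum : variance fhat μ = ∑ i, (a i) ^ 2 * σε2 := by
    rw [hfh, my_variance_const_add μ _ ?_ C]
    · have : (fun ω => ∑ i, a i * ε i ω) = ∑ i, (fun ω => a i * ε i ω) := by
        funext ω; simp
      rw [this, IndepFun.variance_sum (fun i _ => hZL2 i) ?_]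
      · congr 1; funext i
        rw [variance_const_mul, hvar]
      · intro i _ j _ hij
        exact (hindep.indepFun hij).comp (measurable_const_mul _) (measurable_const_mul _)
    · exact integrable_finset_sum _ fun i _ =>
        (((hL2 i).integrable one_le_two).const_mul (a i))
  -- weight product sums
  have hww : ∀ p q : Fin m, ∑ i, w p (X i) * w q (X i) = ((S p ∩ S q).card : ℝ) / (k : ℝ) ^ 2 := by
    intro p q
    have h1 : ∀ i, w p (X i) * w q (X i) = if i ∈ S p ∩ S q then (1 : ℝ) / (k : ℝ) ^ 2 else 0 := by
      intro i
      by_cases h1 : i ∈ S p <;> by_cases h2 : i ∈ S q <;>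
        simp [hw, h1, h2, Finset.mem_inter, div_mul_div_comm, pow_two]
    simp_rw [h1]
    rw [Finset.sum_ite_mem, Finset.univ_inter, Finset.sum_const, nsmul_eq_mul, mul_one_div]
  -- key algebraic identity
  have hkey : ∑ i, (a i) ^ 2 =
      ∑ p, ∑ q, (((S p ∩ S q).card : ℝ) / (k : ℝ) ^ 2) * B p X₀ * B q X₀ := by
    have : ∀ i, (a i) ^ 2 = ∑ p, ∑ q, (w p (X i) * w q (X i)) * (B p X₀ * B q X₀) := by
      intro i
      rw [ha]; simp only []
      rw [sq, Finset.sum_mul_sum]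
      congr 1; funext p; congr 1; funext q; ring
    simp_rw [this]
    rw [Finset.sum_comm]
    congr 1; funext p
    rw [Finset.sum_comm]
    congr 1; funext q
    rw [← Finset.sum_mul, hww]
    ring
  constructor
  · rw [hvarsum, ← Finset.sum_mul, hkey, mul_comm]
  · -- inequality
    have hanonneg : ∀ i, 0 ≤ a i := by
      intro i
      apply Finset.sum_nonneg
      intro p _
      apply mul_nonneg _ (hB0 p X₀)
      rw [hw]; positivity
    have hale : ∀ i, a i ≤ 1 / k := by
      intro i
      calc a i ≤ ∑ p, (1 / (k : ℝ)) * B p X₀ := by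
            apply Finset.sum_le_sum
            intro p _
            apply mul_le_mul_of_nonneg_right _ (hB0 p X₀)
            rw [hw]
            split
            · exact le_rfl
            · positivity
        _ = 1 / k := by rw [← Finset.mul_sum, hpart, mul_one]
    have hasum : ∑ i, a i = 1 := by
      rw [ha]; simp only []
      rw [Finset.sum_comm]
      calc ∑ p, ∑ i, w p (X i) * B p X₀ = ∑ p, (∑ i, w p (X i)) * B p X₀ := by
            simp_rw [Finset.sum_mul]
        _ = 1 := by simp_rw [hwsum, one_mul]; exact hpart
    have hσ : 0 ≤ σε2 := by
      have i0 : Fin N := ⟨0, lt_of_lt_of_le hk hkN⟩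
      rw [← hvar i0]; exact variance_nonneg _ _
    rw [hvarsum, ← Finset.sum_mul]
    have : ∑ i, (a i) ^ 2 ≤ 1 / k := by
      calc ∑ i, (a i) ^ 2 ≤ ∑ i, (1 / (k : ℝ)) * a i := by
            apply Finset.sum_le_sum
            intro i _
            rw [sq]
            exact mul_le_mul_of_nonneg_right (hale i) (hanonneg i)
        _ = 1 / k := by rw [← Finset.mul_sum, hasum, mul_one]
    calc (∑ i, (a i) ^ 2) * σε2 ≤ (1 / k) * σε2 := mul_le_mul_of_nonneg_right this hσ
      _ = σε2 / k := by ring
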